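/- Assume β ∈ [0,1] and M > 10. There exists a constant C > 0 (depending only on β and M) such that for all ω₁ > 1 one has C′²³⁴(ω₁) ≤ C · ω₁^{2β − 3/2 − M/2}. -/

import Mathlib

open MeasureTheory Real

noncomputable section

/-- Japanese bracket ⟨ω⟩ = (1 + ω²)^{1/2}. -/
def jb (ω : ℝ) : ℝ := Real.sqrt (1 + ω ^ 2)

/-- n⁰¹(ω) = ⟨ω⟩^{-M/2}. -/
def n01 (M : ℝ) (ω : ℝ) : ℝ := jb ω ^ (-(M / 2))

/-- The operator C₂₁²³⁴, with ω₂ = ω₃ + ω₄ − ω₁. -/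
def C21op (β : ℝ) (k l m : ℝ → ℝ) (ω₁ : ℝ) : ℝ :=
  64 * π ^ 3 * ω₁ ^ (β - 1/2) *
    ∫ ω₃ in (0:ℝ)..(ω₁ / 2), ∫ ω₄ in (ω₁ - ω₃)..ω₁,
      (ω₃ + ω₄ - ω₁) ^ (β + 1/2) * ω₃ ^ β * ω₄ ^ β *
        (k (ω₃ + ω₄ - ω₁) * l ω₃ * m ω₄)

/-- The operator C₂₂²³⁴, with ω₂ = ω₃ + ω₄ − ω₁. -/
def C22op (β : ℝ) (k l m : ℝ → ℝ) (ω₁ : ℝ) : ℝ :=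
  64 * π ^ 3 * ω₁ ^ (β - 1/2) *
    ∫ ω₃ in (ω₁ / 2)..ω₁, ∫ ω₄ in ω₃..ω₁,
      (ω₃ + ω₄ - ω₁) ^ (β + 1/2) * ω₃ ^ β * ω₄ ^ β *
        (k (ω₃ + ω₄ - ω₁) * l ω₃ * m ω₄)

/-- The operator C₃²³⁴, with ω₂ = ω₃ + ω₄ − ω₁. -/
def C3op (β : ℝ) (k l m : ℝ → ℝ) (ω₁ : ℝ) : ℝ :=
  64 * π ^ 3 * ω₁ ^ (β - 1/2) *
    ∫ ω₃ in (0:ℝ)..ω₁, ∫ ω₄ in Set.Ioi ω₁,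
      (ω₃ + ω₄ - ω₁) ^ β * ω₃ ^ (β + 1/2) * ω₄ ^ β *
        (k (ω₃ + ω₄ - ω₁) * l ω₃ * m ω₄)

/-- The operator C₁²³⁴, with ω₂ = ω₃ + ω₄ − ω₁. -/
def C1op (β : ℝ) (k l m : ℝ → ℝ) (ω₁ : ℝ) : ℝ :=
  64 * π ^ 3 * ω₁ ^ β *
    ∫ ω₃ in Set.Ioi ω₁, ∫ ω₄ in Set.Ioi ω₃,
      (ω₃ + ω₄ - ω₁) ^ β * ω₃ ^ β * ω₄ ^ β *
        (k (ω₃ + ω₄ - ω₁) * l ω₃ * m ω₄)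

/-- The full domain of integration {0 ≤ ω₃ ≤ ω₄, ω₃ + ω₄ ≥ ω₁} ⊂ ℝ². -/
def Dom (ω₁ : ℝ) : Set (ℝ × ℝ) := {p | 0 ≤ p.1 ∧ p.1 ≤ p.2 ∧ ω₁ ≤ p.1 + p.2}

/-- The cross-section factor min{√ω₁, √ω₂, √ω₃}, with ω₂ = ω₃ + ω₄ − ω₁,
where p = (ω₃, ω₄). -/
def crossMin (ω₁ : ℝ) (p : ℝ × ℝ) : ℝ :=
  min (Real.sqrt ω₁) (min (Real.sqrt (p.1 + p.2 - ω₁)) (Real.sqrt p.1))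

/-- The operator C^{j₁j₂j₃}[k,l,m](ω₁) where the factor is k(ω_{j₁}) l(ω_{j₂}) m(ω_{j₃}),
with ω₂ = ω₃ + ω₄ − ω₁ and p = (ω₃, ω₄); here the selection of frequencies is passed
as a function `sel : (ℝ × ℝ) → ℝ × ℝ × ℝ` giving (ω_{j₁}, ω_{j₂}, ω_{j₃}). -/
def Cfull (β : ℝ) (k l m : ℝ → ℝ) (sel : ℝ → ℝ × ℝ → ℝ × ℝ × ℝ) (ω₁ : ℝ) : ℝ :=
  64 * π ^ 3 * ω₁ ^ (β - 1/2) *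
    ∫ p in Dom ω₁,
      ((p.1 + p.2 - ω₁) * p.1 * p.2) ^ β * crossMin ω₁ p *
        (k (sel ω₁ p).1 * l (sel ω₁ p).2.1 * m (sel ω₁ p).2.2)

/-- C²³⁴[k,l,m](ω₁): integrand k(ω₂) l(ω₃) m(ω₄). -/
def C234 (β : ℝ) (k l m : ℝ → ℝ) : ℝ → ℝ :=
  Cfull β k l m (fun ω₁ p => (p.1 + p.2 - ω₁, p.1, p.2))

/-- C¹²⁴[k,l,m](ω₁): integrand k(ω₁) l(ω₂) m(ω₄). -/
def C124 (β : ℝ) (k l m : ℝ → ℝ) : ℝ → ℝ :=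
  Cfull β k l m (fun ω₁ p => (ω₁, p.1 + p.2 - ω₁, p.2))

/-- C¹³⁴[k,l,m](ω₁): integrand k(ω₁) l(ω₃) m(ω₄). -/
def C134 (β : ℝ) (k l m : ℝ → ℝ) : ℝ → ℝ :=
  Cfull β k l m (fun ω₁ p => (ω₁, p.1, p.2))

/-- C¹²³[k,l,m](ω₁): integrand k(ω₁) l(ω₂) m(ω₃). -/
def C123 (β : ℝ) (k l m : ℝ → ℝ) : ℝ → ℝ :=
  Cfull β k l m (fun ω₁ p => (ω₁, p.1 + p.2 - ω₁, p.1))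

/-- The operator C′²³⁴(ω₁), i.e. C²³⁴ with the extra cross-section factor
|⟨ω₁⟩^{M/2} − ⟨ω₄⟩^{M/2}|/⟨ω₁⟩^{M/2}, evaluated on ⟨·⟩^{-M/2} in each slot. -/
def Cprime234 (β M : ℝ) (ω₁ : ℝ) : ℝ :=
  64 * π ^ 3 * ω₁ ^ (β - 1/2) *
    ∫ p in Dom ω₁,
      ((p.1 + p.2 - ω₁) * p.1 * p.2) ^ β * crossMin ω₁ p *
        (|jb ω₁ ^ (M / 2) - jb p.2 ^ (M / 2)| /
          (jb ω₁ ^ (M / 2) * jb (p.1 + p.2 - ω₁) ^ (M / 2) *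
            jb p.1 ^ (M / 2) * jb p.2 ^ (M / 2)))



lemma jb_rpow (M t : ℝ) : jb t ^ (M/2) = (1 + t^2) ^ (M/4) := by
  rw [jb, Real.sqrt_eq_rpow, ← Real.rpow_mul (by positivity)]
  congr 1; ring

lemma jb_pow_pos (M t : ℝ) : 0 < jb t ^ (M/2) := by
  rw [jb_rpow]; exact Real.rpow_pos_of_pos (by positivity) _

lemma rpow_le_one_add' {β : ℝ} (t : ℝ) (ht : 0 ≤ t) (hβ0 : 0 ≤ β) (hβ1 : β ≤ 1) :
    t ^ β ≤ 1 + t := by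
  rcases le_total t 1 with h | h
  · have := Real.rpow_le_one ht h hβ0; linarith
  · have h1 : t ^ β ≤ t ^ (1:ℝ) := Real.rpow_le_rpow_of_exponent_le h hβ1
    rw [Real.rpow_one] at h1; linarith

lemma sqrt_le_one_add' (t : ℝ) (ht : 0 ≤ t) : Real.sqrt t ≤ 1 + t := by
  have h1 : Real.sqrt t ≤ Real.sqrt ((1+t)^2) := Real.sqrt_le_sqrt (by nlinarith)
  rwa [Real.sqrt_sq (by linarith)] at h1

lemma cube_le {M : ℝ} (t : ℝ) (ht : 0 ≤ t) (hM : 10 ≤ M) :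
    (1+t)^3 ≤ 2 ^ ((3:ℝ)/2) * ((1+t^2)⁻¹ * (1+t^2) ^ (M/4)) := by
  have h2 : (1+t)^2 ≤ 2*(1+t^2) := by nlinarith [sq_nonneg (1-t)]
  have e1 : (1+t)^3 = ((1+t)^2 : ℝ) ^ ((3:ℝ)/2) := by
    rw [← Real.rpow_natCast (1+t) 2, ← Real.rpow_mul (by linarith)]
    rw [show ((2:ℕ):ℝ) * (3/2) = ((3:ℕ):ℝ) by norm_num, Real.rpow_natCast]
  calc (1+t)^3 = ((1+t)^2 : ℝ) ^ ((3:ℝ)/2) := e1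
    _ ≤ (2*(1+t^2)) ^ ((3:ℝ)/2) := Real.rpow_le_rpow (by positivity) h2 (by norm_num)
    _ = 2 ^ ((3:ℝ)/2) * (1+t^2) ^ ((3:ℝ)/2) := Real.mul_rpow (by norm_num) (by positivity)
    _ ≤ 2 ^ ((3:ℝ)/2) * (1+t^2) ^ (M/4 - 1) := by
        gcongr
        · nlinarith
        · linarith
    _ = 2 ^ ((3:ℝ)/2) * ((1+t^2)⁻¹ * (1+t^2) ^ (M/4)) := by
        rw [Real.rpow_sub (by positivity), Real.rpow_one]; ring

lemma pervar1 {M β : ℝ} (t : ℝ) (ht : 0 ≤ t) (hβ0 : 0 ≤ β) (hβ1 : β ≤ 1) (hM : 10 ≤ M) :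
    t ^ β * Real.sqrt t * (1+t) ≤ 2 ^ ((3:ℝ)/2) * ((1+t^2)⁻¹ * (1+t^2) ^ (M/4)) := by
  have ha := rpow_le_one_add' t ht hβ0 hβ1
  have hb := sqrt_le_one_add' t ht
  have h1 : t ^ β * Real.sqrt t ≤ (1+t) * (1+t) :=
    mul_le_mul ha hb (Real.sqrt_nonneg t) (by linarith)
  calc t ^ β * Real.sqrt t * (1+t) ≤ (1+t)*(1+t)*(1+t) :=
        mul_le_mul_of_nonneg_right h1 (by linarith)
    _ = (1+t)^3 := by ring
    _ ≤ _ := cube_le t ht hM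

lemma pervar2 {M β : ℝ} (t : ℝ) (ht : 0 ≤ t) (hβ0 : 0 ≤ β) (hβ1 : β ≤ 1) (hM : 10 ≤ M) :
    t ^ β * (1+t) ^ β * (1+t) ≤ 2 ^ ((3:ℝ)/2) * ((1+t^2)⁻¹ * (1+t^2) ^ (M/4)) := by
  have ha := rpow_le_one_add' t ht hβ0 hβ1
  have hb : (1+t) ^ β ≤ 1 + t := by
    have := Real.rpow_le_rpow_of_exponent_le (by linarith : (1:ℝ) ≤ 1+t) hβ1
    rwa [Real.rpow_one] at this
  have h1 : t ^ β * (1+t) ^ β ≤ (1+t) * (1+t) :=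
    mul_le_mul ha hb (Real.rpow_nonneg (by linarith) _) (by linarith)
  calc t ^ β * (1+t) ^ β * (1+t) ≤ (1+t)*(1+t)*(1+t) :=
        mul_le_mul_of_nonneg_right h1 (by linarith)
    _ = (1+t)^3 := by ring
    _ ≤ _ := cube_le t ht hM

lemma psi_diff {M : ℝ} (hM : 2 ≤ M) {a b : ℝ} (ha : 0 ≤ a) (hb : 0 ≤ b) :
    |(1+a^2) ^ (M/4) - (1+b^2) ^ (M/4)| ≤
      M/2 * (1 + max a b ^ 2) ^ (M/4 - 1/2) * |a - b| := by
  have hder : ∀ x ∈ Set.uIcc b a, HasDerivWithinAt (fun t : ℝ => (1+t^2) ^ (M/4))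
      ((M/4) * (1+x^2) ^ (M/4 - 1) * (2*x)) (Set.uIcc b a) x := by
    intro x _
    have h1 : HasDerivAt (fun t : ℝ => 1 + t^2) (2*x) x := by
      simpa using ((hasDerivAt_pow 2 x).const_add 1)
    have h2 : HasDerivAt (fun y : ℝ => y ^ (M/4)) ((M/4) * (1+x^2) ^ (M/4 - 1)) (1+x^2) :=
      Real.hasDerivAt_rpow_const (Or.inl (by positivity))
    exact (h2.comp x h1).hasDerivWithinAt
  have hbound : ∀ x ∈ Set.uIcc b a, ‖(M/4) * (1+x^2) ^ (M/4 - 1) * (2*x)‖ ≤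
      M/2 * (1 + max a b ^ 2) ^ (M/4 - 1/2) := by
    intro x hx
    rw [Set.uIcc, Set.mem_Icc] at hx
    have hx0 : 0 ≤ x := le_trans (le_inf hb ha) hx.1
    have hxm : x ≤ max a b := by rw [max_comm]; exact hx.2
    have hxs : x ≤ (1+x^2) ^ ((1:ℝ)/2) := by
      rw [← Real.sqrt_eq_rpow]
      calc x = Real.sqrt (x^2) := (Real.sqrt_sq hx0).symm
        _ ≤ Real.sqrt (1+x^2) := Real.sqrt_le_sqrt (by linarith)
    have hn : ‖(M/4) * (1+x^2) ^ (M/4 - 1) * (2*x)‖ = (M/4) * (1+x^2) ^ (M/4 - 1) * (2*x) := by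
      rw [Real.norm_eq_abs, abs_of_nonneg]
      have : (0:ℝ) ≤ (1+x^2) ^ (M/4-1) := (Real.rpow_pos_of_pos (by positivity) _).le
      have hM4 : (0:ℝ) ≤ M/4 := by linarith
      positivity
    rw [hn]
    calc (M/4) * (1+x^2) ^ (M/4-1) * (2*x)
        = (M/2) * ((1+x^2) ^ (M/4-1) * x) := by ring
      _ ≤ (M/2) * ((1+x^2) ^ (M/4-1) * (1+x^2) ^ ((1:ℝ)/2)) := by
          have h0 : (0:ℝ) ≤ (1+x^2) ^ (M/4-1) := (Real.rpow_pos_of_pos (by positivity) _).le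
          have := mul_le_mul_of_nonneg_left hxs h0
          nlinarith
      _ = (M/2) * (1+x^2) ^ (M/4 - 1/2) := by
          rw [← Real.rpow_add (by positivity)]; congr 1; ring
      _ ≤ (M/2) * (1 + max a b ^ 2) ^ (M/4 - 1/2) := by
          have h1 : (1:ℝ)+x^2 ≤ 1 + max a b ^ 2 := by nlinarith
          have := Real.rpow_le_rpow (by positivity) h1 (by linarith : (0:ℝ) ≤ M/4 - 1/2)
          nlinarith
  have key := Convex.norm_image_sub_le_of_norm_hasDerivWithin_le hder hbound
    (convex_uIcc b a) Set.left_mem_uIcc Set.right_mem_uIcc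
  simpa [Real.norm_eq_abs] using key

set_option maxHeartbeats 1000000 in
lemma pointwise_bd (β M : ℝ) (hβ0 : 0 ≤ β) (hβ1 : β ≤ 1) (hM : 10 < M)
    (ω₁ : ℝ) (hω : 1 < ω₁) (p : ℝ × ℝ) (hp : p ∈ Dom ω₁) :
    ((p.1 + p.2 - ω₁) * p.1 * p.2) ^ β * crossMin ω₁ p *
      (|jb ω₁ ^ (M / 2) - jb p.2 ^ (M / 2)| /
        (jb ω₁ ^ (M / 2) * jb (p.1 + p.2 - ω₁) ^ (M / 2) *
          jb p.1 ^ (M / 2) * jb p.2 ^ (M / 2))) ≤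
    4 * M * 2 ^ (M/2) * ω₁ ^ (β - 1 - M/2) *
      ((1 + p.1^2)⁻¹ * (1 + (p.1 + p.2 - ω₁)^2)⁻¹) := by
  obtain ⟨hx, hxw, hsum⟩ := hp
  have hω0 : (0:ℝ) < ω₁ := by linarith
  set x := p.1 with hxd
  set w := p.2 with hwd
  have hu : 0 ≤ x + w - ω₁ := by linarith
  set u := x + w - ω₁ with hud
  have hw : 0 ≤ w := le_trans hx hxw
  have hw2 : ω₁/2 ≤ w := by linarith
  have hM2 : (0:ℝ) ≤ M/2 := by linarith
  set m := max ω₁ w with hmd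
  -- numerator bound
  have hnum : |(1+ω₁^2) ^ (M/4) - (1+w^2) ^ (M/4)| ≤
      M/2 * ((1+m^2) ^ (M/4) * ω₁⁻¹) * ((1+x)*(1+u)) := by
    have h1 := psi_diff (M := M) (by linarith) hω0.le hw
    have h2 : (1 + m^2) ^ (M/4 - 1/2) ≤ (1+m^2) ^ (M/4) * ω₁⁻¹ := by
      have hmω : ω₁ ≤ m := le_max_left _ _
      have hsq : ω₁ ≤ (1+m^2) ^ ((1:ℝ)/2) := by
        rw [← Real.sqrt_eq_rpow]
        calc ω₁ ≤ m := hmω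
          _ = Real.sqrt (m^2) := (Real.sqrt_sq (by linarith)).symm
          _ ≤ Real.sqrt (1+m^2) := Real.sqrt_le_sqrt (by linarith)
      have e : (1+m^2) ^ (M/4 - 1/2) = (1+m^2) ^ (M/4) * ((1+m^2) ^ ((1:ℝ)/2))⁻¹ := by
        rw [← Real.rpow_neg (by positivity), ← Real.rpow_add (by positivity)]
        ring_nf
      rw [e]
      have hinv : ((1+m^2) ^ ((1:ℝ)/2))⁻¹ ≤ ω₁⁻¹ :=
        inv_anti₀ hω0 hsq
      exact mul_le_mul_of_nonneg_left hinv (Real.rpow_pos_of_pos (by positivity) _).le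
    have h3 : |ω₁ - w| ≤ (1+x)*(1+u) := by
      have he : ω₁ - w = x - u := by rw [hud]; ring
      rw [he, abs_le]
      constructor <;> nlinarith
    calc |(1+ω₁^2) ^ (M/4) - (1+w^2) ^ (M/4)|
        ≤ M/2 * (1+m^2) ^ (M/4-1/2) * |ω₁ - w| := h1
      _ ≤ M/2 * ((1+m^2) ^ (M/4) * ω₁⁻¹) * ((1+x)*(1+u)) := by
          apply mul_le_mul (mul_le_mul_of_nonneg_left h2 hM2) h3 (abs_nonneg _)
          have : (0:ℝ) < (1+m^2) ^ (M/4) * ω₁⁻¹ :=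
            mul_pos (Real.rpow_pos_of_pos (by positivity) _) (inv_pos.mpr hω0)
          nlinarith
  -- denominator bound
  have hden : (1+m^2) ^ (M/4) * (ω₁^(M/2) / 2^(M/2)) * ((1+x^2)^(M/4) * (1+u^2)^(M/4)) ≤
      (1+ω₁^2)^(M/4) * (1+u^2)^(M/4) * (1+x^2)^(M/4) * (1+w^2)^(M/4) := by
    have hmn : ω₁^(M/2) / 2^(M/2) ≤ (1 + (min ω₁ w)^2) ^ (M/4) := by
      have h1 : ω₁/2 ≤ min ω₁ w := le_min (by linarith) hw2
      have h0 : (0:ℝ) ≤ ω₁/2 := by linarith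
      have e1 : ω₁^(M/2) / 2^(M/2) = (ω₁/2)^(M/2) :=
        (Real.div_rpow hω0.le (by norm_num : (0:ℝ) ≤ 2) _).symm
      have e2 : (ω₁/2)^(M/2) = ((ω₁/2)^2 : ℝ) ^ (M/4) := by
        rw [← Real.rpow_natCast (ω₁/2) 2, ← Real.rpow_mul h0]
        congr 1; push_cast; ring
      rw [e1, e2]
      exact Real.rpow_le_rpow (by positivity) (by nlinarith) (by linarith)
    have hprod : (1+m^2)^(M/4) * (1+(min ω₁ w)^2)^(M/4) = (1+ω₁^2)^(M/4) * (1+w^2)^(M/4) := by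
      rcases le_total ω₁ w with h | h
      · rw [hmd, max_eq_right h, min_eq_left h]; ring
      · rw [hmd, max_eq_left h, min_eq_right h]
    calc (1+m^2) ^ (M/4) * (ω₁^(M/2) / 2^(M/2)) * ((1+x^2)^(M/4) * (1+u^2)^(M/4))
        ≤ (1+m^2) ^ (M/4) * (1+(min ω₁ w)^2)^(M/4) * ((1+x^2)^(M/4) * (1+u^2)^(M/4)) := by
          apply mul_le_mul_of_nonneg_right (mul_le_mul_of_nonneg_left hmn
            (Real.rpow_pos_of_pos (by positivity) _).le)
          exact (mul_pos (Real.rpow_pos_of_pos (by positivity) _)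
            (Real.rpow_pos_of_pos (by positivity) _)).le
      _ = (1+ω₁^2)^(M/4) * (1+u^2)^(M/4) * (1+x^2)^(M/4) * (1+w^2)^(M/4) := by
          rw [hprod]; ring
  -- positivity facts
  have pψ : ∀ t : ℝ, (0:ℝ) < (1+t^2) ^ (M/4) := fun t => Real.rpow_pos_of_pos (by positivity) _
  have hden_pos : (0:ℝ) < (1+m^2) ^ (M/4) * (ω₁^(M/2) / 2^(M/2)) * ((1+x^2)^(M/4) * (1+u^2)^(M/4)) := by
    have h2 : (0:ℝ) < ω₁^(M/2) / 2^(M/2) :=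
      div_pos (Real.rpow_pos_of_pos hω0 _) (Real.rpow_pos_of_pos (by norm_num) _)
    exact mul_pos (mul_pos (pψ m) h2) (mul_pos (pψ x) (pψ u))
  -- step 1
  simp only [jb_rpow]
  rw [show (1 + (x+w-ω₁)^2 : ℝ) = 1 + u^2 by rw [hud]]
  have step1 : ((u) * x * w) ^ β * crossMin ω₁ p *
      (|(1+ω₁^2) ^ (M/4) - (1+w^2) ^ (M/4)| /
        ((1+ω₁^2)^(M/4) * (1+u^2)^(M/4) * (1+x^2)^(M/4) * (1+w^2)^(M/4))) ≤
      (u ^ β * x ^ β * (ω₁ ^ β * (1+u) ^ β)) * Real.sqrt x *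
      ((M/2 * ((1+m^2) ^ (M/4) * ω₁⁻¹) * ((1+x)*(1+u))) /
        ((1+m^2) ^ (M/4) * (ω₁^(M/2) / 2^(M/2)) * ((1+x^2)^(M/4) * (1+u^2)^(M/4)))) := by
    have e1 : (u * x * w) ^ β = u ^ β * x ^ β * w ^ β := by
      rw [Real.mul_rpow (by positivity) hw, Real.mul_rpow hu hx]
    have f1 : u ^ β * x ^ β * w ^ β ≤ u ^ β * x ^ β * (ω₁ ^ β * (1+u) ^ β) := by
      apply mul_le_mul_of_nonneg_left _ (by positivity)
      rw [← Real.mul_rpow hω0.le (by linarith)]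
      exact Real.rpow_le_rpow hw (by nlinarith) hβ0
    have f2 : crossMin ω₁ p ≤ Real.sqrt x := by
      rw [crossMin]
      exact le_trans (min_le_right _ _) (min_le_right _ _)
    have f3 : |(1+ω₁^2) ^ (M/4) - (1+w^2) ^ (M/4)| /
        ((1+ω₁^2)^(M/4) * (1+u^2)^(M/4) * (1+x^2)^(M/4) * (1+w^2)^(M/4)) ≤
        (M/2 * ((1+m^2) ^ (M/4) * ω₁⁻¹) * ((1+x)*(1+u))) /
        ((1+m^2) ^ (M/4) * (ω₁^(M/2) / 2^(M/2)) * ((1+x^2)^(M/4) * (1+u^2)^(M/4))) := by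
      exact div_le_div₀ (mul_nonneg (mul_nonneg hM2 (mul_nonneg (pψ m).le
        (inv_nonneg.mpr hω0.le))) (mul_nonneg (by linarith : (0:ℝ) ≤ 1+x)
        (by linarith : (0:ℝ) ≤ 1+u))) hnum hden_pos hden
    rw [e1]
    have hcm0 : 0 ≤ crossMin ω₁ p := le_min (Real.sqrt_nonneg _)
      (le_min (Real.sqrt_nonneg _) (Real.sqrt_nonneg _))
    have h0a : (0:ℝ) ≤ u ^ β * x ^ β := mul_nonneg (Real.rpow_nonneg hu _) (Real.rpow_nonneg hx _)
    have h0b : (0:ℝ) ≤ u ^ β * x ^ β * (ω₁ ^ β * (1+u) ^ β) := mul_nonneg h0a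
      (mul_nonneg (Real.rpow_nonneg hω0.le _) (Real.rpow_nonneg (by linarith) _))
    apply mul_le_mul (mul_le_mul f1 f2 hcm0 h0b) f3
    · apply div_nonneg (abs_nonneg _)
      exact (mul_pos (mul_pos (mul_pos (pψ ω₁) (pψ u)) (pψ x)) (pψ w)).le
    · exact mul_nonneg h0b (Real.sqrt_nonneg x)
  refine le_trans step1 ?_
  -- step 2: algebraic identity + per-variable bounds
  have hrw : ω₁ ^ (β - 1 - M/2) = ω₁ ^ β * ω₁⁻¹ * (ω₁ ^ (M/2))⁻¹ := by
    rw [show β - 1 - M/2 = β + (-1) + (-(M/2)) by ring, Real.rpow_add hω0,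
      Real.rpow_add hω0, Real.rpow_neg_one, Real.rpow_neg hω0.le]
  have step2 : (u ^ β * x ^ β * (ω₁ ^ β * (1+u) ^ β)) * Real.sqrt x *
      ((M/2 * ((1+m^2) ^ (M/4) * ω₁⁻¹) * ((1+x)*(1+u))) /
        ((1+m^2) ^ (M/4) * (ω₁^(M/2) / 2^(M/2)) * ((1+x^2)^(M/4) * (1+u^2)^(M/4)))) =
      M/2 * 2^(M/2) * (ω₁ ^ β * ω₁⁻¹ * (ω₁ ^ (M/2))⁻¹) *
        ((x ^ β * Real.sqrt x * (1+x)) / (1+x^2)^(M/4) *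
         ((u ^ β * (1+u) ^ β * (1+u)) / (1+u^2)^(M/4))) := by
    have n1 : ((1+m^2) ^ (M/4) : ℝ) ≠ 0 := (pψ m).ne'
    have n2 : ((1+x^2) ^ (M/4) : ℝ) ≠ 0 := (pψ x).ne'
    have n3 : ((1+u^2) ^ (M/4) : ℝ) ≠ 0 := (pψ u).ne'
    have n4 : (ω₁ : ℝ) ≠ 0 := hω0.ne'
    have n5 : (ω₁ ^ (M/2) : ℝ) ≠ 0 := (Real.rpow_pos_of_pos hω0 _).ne'
    have n6 : ((2:ℝ) ^ (M/2) : ℝ) ≠ 0 := (Real.rpow_pos_of_pos (by norm_num) _).ne'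
    field_simp
  rw [step2]
  have hx1 := pervar1 (M := M) (β := β) x hx hβ0 hβ1 hM.le
  have hu1 := pervar2 (M := M) (β := β) u hu hβ0 hβ1 hM.le
  have hX : (x ^ β * Real.sqrt x * (1+x)) / (1+x^2)^(M/4) ≤ 2 ^ ((3:ℝ)/2) * (1+x^2)⁻¹ := by
    rw [div_le_iff₀ (pψ x)]
    calc x ^ β * Real.sqrt x * (1+x) ≤ 2 ^ ((3:ℝ)/2) * ((1+x^2)⁻¹ * (1+x^2) ^ (M/4)) := hx1
      _ = 2 ^ ((3:ℝ)/2) * (1+x^2)⁻¹ * (1+x^2) ^ (M/4) := by ring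
  have hU : (u ^ β * (1+u) ^ β * (1+u)) / (1+u^2)^(M/4) ≤ 2 ^ ((3:ℝ)/2) * (1+u^2)⁻¹ := by
    rw [div_le_iff₀ (pψ u)]
    calc u ^ β * (1+u) ^ β * (1+u) ≤ 2 ^ ((3:ℝ)/2) * ((1+u^2)⁻¹ * (1+u^2) ^ (M/4)) := hu1
      _ = 2 ^ ((3:ℝ)/2) * (1+u^2)⁻¹ * (1+u^2) ^ (M/4) := by ring
  have hpre : (0:ℝ) ≤ M/2 * 2^(M/2) * (ω₁ ^ β * ω₁⁻¹ * (ω₁ ^ (M/2))⁻¹) := by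
    have h1 : (0:ℝ) < ω₁ ^ β * ω₁⁻¹ * (ω₁ ^ (M/2))⁻¹ := by positivity
    have h2 : (0:ℝ) < (2:ℝ)^(M/2) := Real.rpow_pos_of_pos (by norm_num) _
    exact mul_nonneg (mul_nonneg hM2 h2.le) h1.le
  have hXU : (x ^ β * Real.sqrt x * (1+x)) / (1+x^2)^(M/4) *
      ((u ^ β * (1+u) ^ β * (1+u)) / (1+u^2)^(M/4)) ≤
      (2 ^ ((3:ℝ)/2) * (1+x^2)⁻¹) * (2 ^ ((3:ℝ)/2) * (1+u^2)⁻¹) := by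
    apply mul_le_mul hX hU
    · apply div_nonneg _ (pψ u).le
      have h1 : (0:ℝ) ≤ u ^ β := Real.rpow_nonneg hu _
      have h2 : (0:ℝ) ≤ (1+u) ^ β := Real.rpow_nonneg (by linarith) _
      exact mul_nonneg (mul_nonneg h1 h2) (by linarith)
    · positivity
  calc M/2 * 2^(M/2) * (ω₁ ^ β * ω₁⁻¹ * (ω₁ ^ (M/2))⁻¹) *
        ((x ^ β * Real.sqrt x * (1+x)) / (1+x^2)^(M/4) *
         ((u ^ β * (1+u) ^ β * (1+u)) / (1+u^2)^(M/4)))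
      ≤ M/2 * 2^(M/2) * (ω₁ ^ β * ω₁⁻¹ * (ω₁ ^ (M/2))⁻¹) *
        ((2 ^ ((3:ℝ)/2) * (1+x^2)⁻¹) * (2 ^ ((3:ℝ)/2) * (1+u^2)⁻¹)) :=
        mul_le_mul_of_nonneg_left hXU hpre
    _ = 4 * M * 2 ^ (M/2) * ω₁ ^ (β - 1 - M/2) * ((1 + x^2)⁻¹ * (1 + u^2)⁻¹) := by
        rw [hrw]
        have e8 : (2:ℝ) ^ ((3:ℝ)/2) * 2 ^ ((3:ℝ)/2) = 8 := by
          rw [← Real.rpow_add (by norm_num : (0:ℝ) < 2),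
            show (3:ℝ)/2 + 3/2 = ((3:ℕ):ℝ) by norm_num, Real.rpow_natCast]
          norm_num
        linear_combination (M/2 * 2^(M/2) * (ω₁^β * ω₁⁻¹ * (ω₁^(M/2))⁻¹) *
          ((1+x^2)⁻¹ * (1+u^2)⁻¹)) * e8


/-- Upper bound: C′²³⁴(ω₁) ≲ ω₁^{2β − 3/2 − M/2} for ω₁ > 1. -/
theorem Cprime234_upper_bound (β M : ℝ) (hβ0 : 0 ≤ β) (hβ1 : β ≤ 1) (hM : 10 < M) :
    ∃ C : ℝ, 0 < C ∧ ∀ ω₁ : ℝ, 1 < ω₁ →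
      Cprime234 β M ω₁ ≤ C * ω₁ ^ (2 * β - 3/2 - M / 2) := by
  set J : ℝ := ∫ x : ℝ, (1+x^2)⁻¹ with hJdef
  have hJ : 0 ≤ J := integral_nonneg fun x => by positivity
  have h2M : (0:ℝ) < (2:ℝ)^(M/2) := Real.rpow_pos_of_pos (by norm_num) _
  have hπ : (0:ℝ) < 64 * π^3 := by positivity
  refine ⟨64 * π^3 * (4*M*2^(M/2)) * (J*J) + 1, ?_, ?_⟩
  · have h1 : (0:ℝ) ≤ 64*π^3*(4*M*2^(M/2))*(J*J) :=
      mul_nonneg (mul_nonneg hπ.le (mul_nonneg (by linarith) h2M.le)) (mul_nonneg hJ hJ)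
    linarith
  intro ω₁ hω
  have hω0 : (0:ℝ) < ω₁ := lt_trans one_pos hω
  -- shear measure preserving
  have hT : MeasurePreserving (fun q : ℝ × ℝ => (q.1, q.2 + (q.1 - ω₁)))
      (volume : Measure (ℝ×ℝ)) volume := by
    rw [Measure.volume_eq_prod]
    exact (MeasurePreserving.id volume).skew_product
      (measurable_snd.add (measurable_fst.sub measurable_const))
      (Filter.Eventually.of_forall fun a => map_add_right_eq_self volume (a - ω₁))
  have hG : Integrable (fun q : ℝ × ℝ => (1+q.1^2)⁻¹ * (1+q.2^2)⁻¹)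
      (volume : Measure (ℝ×ℝ)) := by
    rw [Measure.volume_eq_prod]
    exact integrable_inv_one_add_sq.mul_prod integrable_inv_one_add_sq
  have hGJ : (∫ q : ℝ×ℝ, (1+q.1^2)⁻¹ * (1+q.2^2)⁻¹) = J * J := by
    rw [Measure.volume_eq_prod, hJdef]
    exact integral_prod_mul (fun a : ℝ => (1+a^2)⁻¹) (fun a : ℝ => (1+a^2)⁻¹)
  have hc : (fun q : ℝ × ℝ => (1+q.1^2)⁻¹ * (1+(q.1+q.2-ω₁)^2)⁻¹)
      = (fun q : ℝ × ℝ => (1+q.1^2)⁻¹ * (1+q.2^2)⁻¹) ∘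
        (fun q : ℝ×ℝ => (q.1, q.2 + (q.1 - ω₁))) := by
    funext q
    simp only [Function.comp_apply]
    congr 2
    ring
  have hh : Integrable (fun q : ℝ × ℝ => (1+q.1^2)⁻¹ * (1+(q.1+q.2-ω₁)^2)⁻¹)
      (volume : Measure (ℝ×ℝ)) := by
    rw [hc]
    have := (integrable_map_measure (by rw [hT.map_eq]; exact hG.aestronglyMeasurable)
      hT.measurable.aemeasurable).mp (by rw [hT.map_eq]; exact hG)
    exact this
  have hhint : (∫ q : ℝ×ℝ, (1+q.1^2)⁻¹ * (1+(q.1+q.2-ω₁)^2)⁻¹) = J * J := by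
    have e2 := integral_map (φ := fun q : ℝ×ℝ => (q.1, q.2 + (q.1 - ω₁)))
      hT.measurable.aemeasurable
      (by rw [hT.map_eq]; exact hG.aestronglyMeasurable :
        AEStronglyMeasurable (fun q : ℝ×ℝ => (1+q.1^2)⁻¹ * (1+q.2^2)⁻¹) _)
    rw [hT.map_eq, hGJ] at e2
    calc ∫ q : ℝ×ℝ, (1+q.1^2)⁻¹ * (1+(q.1+q.2-ω₁)^2)⁻¹
        = ∫ x : ℝ×ℝ, (1 + ((fun q : ℝ×ℝ => (q.1, q.2 + (q.1 - ω₁))) x).1 ^ 2)⁻¹ *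
            (1 + ((fun q : ℝ×ℝ => (q.1, q.2 + (q.1 - ω₁))) x).2 ^ 2)⁻¹ := by
          apply integral_congr_ae
          apply Filter.Eventually.of_forall
          intro q
          show (1+q.1^2)⁻¹ * (1+(q.1+q.2-ω₁)^2)⁻¹ =
            (1+q.1^2)⁻¹ * (1+(q.2+(q.1-ω₁))^2)⁻¹
          ring_nf
      _ = J * J := e2.symm
  have hDom : MeasurableSet (Dom ω₁) := by
    have : Dom ω₁ = {p : ℝ×ℝ | 0 ≤ p.1} ∩ ({p : ℝ×ℝ | p.1 ≤ p.2} ∩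
        {p : ℝ×ℝ | ω₁ ≤ p.1 + p.2}) := by
      ext p; simp [Dom, Set.mem_setOf_eq, and_assoc]
    rw [this]
    exact (measurableSet_le measurable_const measurable_fst).inter
      ((measurableSet_le measurable_fst measurable_snd).inter
        (measurableSet_le measurable_const (measurable_fst.add measurable_snd)))
  have hgi : Integrable (fun p : ℝ×ℝ => 4*M*2^(M/2) * ω₁^(β-1-M/2) *
      ((1+p.1^2)⁻¹*(1+(p.1+p.2-ω₁)^2)⁻¹)) (volume : Measure (ℝ×ℝ)) := hh.const_mul _
  have hgnn : ∀ p : ℝ×ℝ, 0 ≤ 4*M*2^(M/2) * ω₁^(β-1-M/2) *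
      ((1+p.1^2)⁻¹*(1+(p.1+p.2-ω₁)^2)⁻¹) := by
    intro p
    have h1 : (0:ℝ) ≤ 4*M := by linarith
    have h2 : (0:ℝ) < ω₁^(β-1-M/2) := Real.rpow_pos_of_pos hω0 _
    exact mul_nonneg (mul_nonneg (mul_nonneg h1 h2M.le) h2.le) (by positivity)
  have key : (∫ p in Dom ω₁,
      ((p.1 + p.2 - ω₁) * p.1 * p.2) ^ β * crossMin ω₁ p *
        (|jb ω₁ ^ (M / 2) - jb p.2 ^ (M / 2)| /
          (jb ω₁ ^ (M / 2) * jb (p.1 + p.2 - ω₁) ^ (M / 2) *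
            jb p.1 ^ (M / 2) * jb p.2 ^ (M / 2)))) ≤
      4*M*2^(M/2) * ω₁^(β-1-M/2) * (J*J) := by
    calc (∫ p in Dom ω₁,
        ((p.1 + p.2 - ω₁) * p.1 * p.2) ^ β * crossMin ω₁ p *
          (|jb ω₁ ^ (M / 2) - jb p.2 ^ (M / 2)| /
            (jb ω₁ ^ (M / 2) * jb (p.1 + p.2 - ω₁) ^ (M / 2) *
              jb p.1 ^ (M / 2) * jb p.2 ^ (M / 2))))
        ≤ ∫ p in Dom ω₁, 4*M*2^(M/2) * ω₁^(β-1-M/2) *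
            ((1+p.1^2)⁻¹*(1+(p.1+p.2-ω₁)^2)⁻¹) := by
          apply integral_mono_of_nonneg
          · filter_upwards [ae_restrict_mem hDom] with p hp
            obtain ⟨h1, h2, h3⟩ := hp
            have hnn1 : (0:ℝ) ≤ ((p.1 + p.2 - ω₁) * p.1 * p.2) ^ β :=
              Real.rpow_nonneg (mul_nonneg (mul_nonneg
                (by linarith : (0:ℝ) ≤ p.1+p.2-ω₁) h1) (le_trans h1 h2)) _
            have hnn2 : 0 ≤ crossMin ω₁ p := le_min (Real.sqrt_nonneg _)
              (le_min (Real.sqrt_nonneg _) (Real.sqrt_nonneg _))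
            have hnn3 : 0 ≤ |jb ω₁ ^ (M / 2) - jb p.2 ^ (M / 2)| /
                (jb ω₁ ^ (M / 2) * jb (p.1 + p.2 - ω₁) ^ (M / 2) *
                  jb p.1 ^ (M / 2) * jb p.2 ^ (M / 2)) :=
              div_nonneg (abs_nonneg _) (mul_nonneg (mul_nonneg (mul_nonneg
                (jb_pow_pos M ω₁).le (jb_pow_pos M _).le) (jb_pow_pos M _).le)
                (jb_pow_pos M _).le)
            exact mul_nonneg (mul_nonneg hnn1 hnn2) hnn3
          · exact hgi.restrict
          · filter_upwards [ae_restrict_mem hDom] with p hp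
            exact pointwise_bd β M hβ0 hβ1 hM ω₁ hω p hp
      _ ≤ ∫ p : ℝ×ℝ, 4*M*2^(M/2) * ω₁^(β-1-M/2) *
            ((1+p.1^2)⁻¹*(1+(p.1+p.2-ω₁)^2)⁻¹) :=
          setIntegral_le_integral hgi (Filter.Eventually.of_forall hgnn)
      _ = 4*M*2^(M/2) * ω₁^(β-1-M/2) * (J*J) := by
          rw [integral_const_mul, hhint]
  -- conclude
  rw [Cprime234]
  have hfac : (0:ℝ) < 64 * π^3 * ω₁^(β-1/2) := by positivity
  calc 64 * π ^ 3 * ω₁ ^ (β - 1/2) * ∫ p in Dom ω₁,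
        ((p.1 + p.2 - ω₁) * p.1 * p.2) ^ β * crossMin ω₁ p *
          (|jb ω₁ ^ (M / 2) - jb p.2 ^ (M / 2)| /
            (jb ω₁ ^ (M / 2) * jb (p.1 + p.2 - ω₁) ^ (M / 2) *
              jb p.1 ^ (M / 2) * jb p.2 ^ (M / 2)))
      ≤ 64 * π ^ 3 * ω₁ ^ (β - 1/2) * (4*M*2^(M/2) * ω₁^(β-1-M/2) * (J*J)) :=
        mul_le_mul_of_nonneg_left key hfac.le
    _ = 64 * π^3 * (4*M*2^(M/2)) * (J*J) * ω₁ ^ (2*β - 3/2 - M/2) := by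
        rw [show (2*β - 3/2 - M/2 : ℝ) = (β - 1/2) + (β - 1 - M/2) by ring,
          Real.rpow_add hω0]
        ring
    _ ≤ (64 * π^3 * (4*M*2^(M/2)) * (J*J) + 1) * ω₁ ^ (2*β - 3/2 - M/2) := by
        have h1 : (0:ℝ) < ω₁ ^ (2*β - 3/2 - M/2) := Real.rpow_pos_of_pos hω0 _
        nlinarith
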